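/- arXiv:1112.0853 — 5 statements merged into one kernel-verified Lean document; each statement's English description precedes it below -/
import Mathlib

section
/- For any integer k ≥ 1, the k-th elementary symmetric function of 1, 1/3, ..., 1/(2k+3) equals (k+1)(k+2)(3k²+11k+9) / (6 ∏_{i=0}^{k+1} (1+2i)). -/
open Finset

lemma e1_odd (n : ℕ) :
    ∑ t ∈ (Finset.range n).powersetCard 1, ∏ i ∈ t, ((1 + 2 * i : ℚ)) = (n : ℚ) ^ 2 := by
  rw [Finset.powersetCard_one, Finset.sum_map]
  simp only [Function.Embedding.coeFn_mk, Finset.prod_singleton]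
  induction n with
  | zero => simp
  | succ n ih =>
    rw [Finset.sum_range_succ, ih]
    push_cast
    ring

lemma e2_odd (n : ℕ) :
    ∑ t ∈ (Finset.range n).powersetCard 2, ∏ i ∈ t, ((1 + 2 * i : ℚ)) =
      (n : ℚ) * (3 * n ^ 3 - 4 * n ^ 2 + 1) / 6 := by
  induction n with
  | zero =>
      rw [Finset.powersetCard_eq_empty.2 (by simp)]; simp
  | succ n ih =>
    rw [Finset.range_add_one, Finset.powersetCard_succ_insert (Finset.notMem_range_self) 1,
      Finset.sum_union, Finset.sum_image, ih]
    · have : ∀ t ∈ (Finset.range n).powersetCard 1,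
          ∏ i ∈ insert n t, ((1 + 2 * i : ℚ)) = (1 + 2 * n) * ∏ i ∈ t, ((1 + 2 * i : ℚ)) := by
        intro t ht
        rw [Finset.mem_powersetCard] at ht
        rw [Finset.prod_insert (fun hn => Finset.notMem_range_self (ht.1 hn))]
      rw [Finset.sum_congr rfl this, ← Finset.mul_sum, e1_odd]
      push_cast
      ring
    · intro a ha b hb hab
      rw [Finset.mem_coe, Finset.mem_powersetCard] at ha hb
      have hna : n ∉ a := fun h => Finset.notMem_range_self (ha.1 h)
      have hnb : n ∉ b := fun h => Finset.notMem_range_self (hb.1 h)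
      rw [← Finset.erase_insert hna, ← Finset.erase_insert hnb, hab]
    · rw [Finset.disjoint_left]
      intro t ht ht'
      rw [Finset.mem_powersetCard] at ht
      rw [Finset.mem_image] at ht'
      obtain ⟨u, hu, rfl⟩ := ht'
      exact Finset.notMem_range_self (ht.1 (Finset.mem_insert_self n u))

theorem esymm_k_of_kplus2 (k : ℕ) (hk : 1 ≤ k) :
    ∑ s ∈ (Finset.range (k + 2)).powersetCard k, ∏ i ∈ s, (1 / (1 + 2 * i) : ℚ) =
    ((k + 1 : ℚ) * (k + 2) * (3 * k ^ 2 + 11 * k + 9)) /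
      (6 * ∏ i ∈ Finset.range (k + 2), ((1 + 2 * i : ℚ))) := by
  have hne : ∀ i : ℕ, (1 + 2 * i : ℚ) ≠ 0 := by
    intro i; positivity
  set P : ℚ := ∏ i ∈ Finset.range (k + 2), ((1 + 2 * i : ℚ)) with hPdef
  have hP : P ≠ 0 := Finset.prod_ne_zero_iff.2 fun i _ => hne i
  have key : ∀ s ∈ (Finset.range (k + 2)).powersetCard k,
      ∏ i ∈ s, (1 / (1 + 2 * i) : ℚ) =
        (∏ i ∈ Finset.range (k + 2) \ s, ((1 + 2 * i : ℚ))) / P := by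
    intro s hs
    rw [Finset.mem_powersetCard] at hs
    have hsplit : (∏ i ∈ Finset.range (k + 2) \ s, ((1 + 2 * i : ℚ))) *
        ∏ i ∈ s, ((1 + 2 * i : ℚ)) = P := Finset.prod_sdiff hs.1
    have hs0 : (∏ i ∈ s, ((1 + 2 * i : ℚ))) ≠ 0 :=
      Finset.prod_ne_zero_iff.2 fun i _ => hne i
    rw [Finset.prod_congr rfl (fun i _ => one_div _), Finset.prod_inv_distrib]
    rw [← hsplit]
    field_simp
  rw [Finset.sum_congr rfl key, ← Finset.sum_div]
  have hbij : ∑ s ∈ (Finset.range (k + 2)).powersetCard k,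
      ∏ i ∈ Finset.range (k + 2) \ s, ((1 + 2 * i : ℚ)) =
      ∑ t ∈ (Finset.range (k + 2)).powersetCard 2, ∏ i ∈ t, ((1 + 2 * i : ℚ)) := by
    apply Finset.sum_nbij' (i := fun s => Finset.range (k + 2) \ s)
      (j := fun t => Finset.range (k + 2) \ t)
    · intro s hs
      rw [Finset.mem_powersetCard] at hs ⊢
      refine ⟨Finset.sdiff_subset, ?_⟩
      rw [Finset.card_sdiff_of_subset hs.1, Finset.card_range, hs.2]
      omega
    · intro t ht
      rw [Finset.mem_powersetCard] at ht ⊢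
      refine ⟨Finset.sdiff_subset, ?_⟩
      rw [Finset.card_sdiff_of_subset ht.1, Finset.card_range, ht.2]
      omega
    · intro s hs
      rw [Finset.mem_powersetCard] at hs
      exact Finset.sdiff_sdiff_eq_self hs.1
    · intro t ht
      rw [Finset.mem_powersetCard] at ht
      exact Finset.sdiff_sdiff_eq_self ht.1
    · intro s hs; rfl
  rw [hbij, e2_odd, div_div]
  congr 1
  push_cast
  ring
end

section
/- For any integer k ≥ 1, the k-th elementary symmetric function of 1, 1/3, ..., 1/(2k+5) equals (k+1)(k+2)(k+3)²(k²+5k+5) / (6 ∏_{i=0}^{k+2} (1+2i)). -/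
open Finset

-- recurrence lemma
lemma esum_rec (f : ℕ → ℚ) (n m : ℕ) :
    ∑ s ∈ (range (n+1)).powersetCard (m+1), ∏ i ∈ s, f i =
    (∑ s ∈ (range n).powersetCard (m+1), ∏ i ∈ s, f i) +
      f n * ∑ s ∈ (range n).powersetCard m, ∏ i ∈ s, f i := by
  rw [range_add_one, powersetCard_succ_insert (notMem_range_self)]
  rw [sum_union]
  · congr 1
    rw [sum_image]
    · rw [mul_sum]
      refine sum_congr rfl fun t ht => ?_
      rw [mem_powersetCard] at ht
      rw [prod_insert (fun h => notMem_range_self (ht.1 h))]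
    · intro a ha b hb hab
      rw [mem_coe, mem_powersetCard] at ha hb
      have han : n ∉ a := fun h => notMem_range_self (ha.1 h)
      have hbn : n ∉ b := fun h => notMem_range_self (hb.1 h)
      rw [← erase_insert han, ← erase_insert hbn, hab]
  · rw [disjoint_left]
    intro a ha hb
    rw [mem_powersetCard] at ha
    simp only [mem_image] at hb
    obtain ⟨t, ht, rfl⟩ := hb
    exact notMem_range_self (ha.1 (mem_insert_self n t))

lemma e1 (n : ℕ) : ∑ s ∈ (range n).powersetCard 1, ∏ i ∈ s, ((1:ℚ)+2*i) = n^2 := by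
  rw [powersetCard_one, sum_map]
  simp only [Function.Embedding.coeFn_mk, prod_singleton]
  induction n with
  | zero => simp
  | succ n ih => rw [sum_range_succ, ih]; push_cast; ring

lemma e2 (n : ℕ) : ∑ s ∈ (range n).powersetCard 2, ∏ i ∈ s, ((1:ℚ)+2*i) =
    n*(n-1)*(3*n^2-n-1)/6 := by
  induction n with
  | zero => rw [Finset.powersetCard_eq_empty.2 (by simp)]; simp
  | succ n ih =>
    rw [show (2:ℕ) = 1 + 1 from rfl, esum_rec, ih, e1]
    push_cast; ring

lemma e3 (n : ℕ) : ∑ s ∈ (range n).powersetCard 3, ∏ i ∈ s, ((1:ℚ)+2*i) =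
    (n-2)*(n-1)*n^2*(n^2-n-1)/6 := by
  induction n with
  | zero => rw [Finset.powersetCard_eq_empty.2 (by simp)]; simp
  | succ n ih =>
    rw [show (3:ℕ) = 2 + 1 from rfl, esum_rec, ih, e2]
    push_cast; ring

theorem esymm_k_of_kplus3 (k : ℕ) (hk : 1 ≤ k) :
    ∑ s ∈ (Finset.range (k + 3)).powersetCard k, ∏ i ∈ s, (1 / (1 + 2 * i) : ℚ) =
    ((k + 1 : ℚ) * (k + 2) * (k + 3) ^ 2 * (k ^ 2 + 5 * k + 5)) /
      (6 * ∏ i ∈ Finset.range (k + 3), ((1 + 2 * i : ℚ))) := by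
  have hpos : ∀ i : ℕ, (0:ℚ) < 1 + 2 * i := fun i => by positivity
  have hP : (∏ i ∈ range (k + 3), ((1 + 2 * i : ℚ))) ≠ 0 :=
    (prod_pos fun i _ => hpos i).ne'
  have key : ∑ s ∈ (range (k + 3)).powersetCard k, ∏ i ∈ s, (1 / (1 + 2 * i) : ℚ) =
      (∑ t ∈ (range (k + 3)).powersetCard 3, ∏ i ∈ t, ((1 + 2 * i : ℚ))) /
        ∏ i ∈ range (k + 3), ((1 + 2 * i : ℚ)) := by
    rw [sum_div]
    refine sum_nbij' (fun s => range (k + 3) \ s) (fun t => range (k + 3) \ t) ?_ ?_ ?_ ?_ ?_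
    · intro s hs
      rw [mem_powersetCard] at hs ⊢
      refine ⟨sdiff_subset, ?_⟩
      rw [card_sdiff_of_subset hs.1, hs.2, card_range]; omega
    · intro t ht
      rw [mem_powersetCard] at ht ⊢
      refine ⟨sdiff_subset, ?_⟩
      rw [card_sdiff_of_subset ht.1, ht.2, card_range]; omega
    · intro s hs
      rw [mem_powersetCard] at hs
      exact Finset.sdiff_sdiff_eq_self hs.1
    · intro t ht
      rw [mem_powersetCard] at ht
      exact Finset.sdiff_sdiff_eq_self ht.1
    · intro s hs
      rw [mem_powersetCard] at hs
      have hsplit : (∏ i ∈ range (k+3) \ s, ((1 + 2 * i : ℚ))) * ∏ i ∈ s, ((1 + 2 * i : ℚ))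
          = ∏ i ∈ range (k + 3), ((1 + 2 * i : ℚ)) := prod_sdiff hs.1
      have hs0 : (∏ i ∈ s, ((1 + 2 * i : ℚ))) ≠ 0 :=
        (prod_pos fun i _ => hpos i).ne'
      rw [← hsplit]
      field_simp
      rw [← prod_mul_distrib]
      exact prod_eq_one fun i _ => one_div_mul_cancel (hpos i).ne'
  rw [key, e3]
  have h3 : ((k:ℚ) + 3) ≠ 0 := by positivity
  push_cast
  rw [div_div, div_eq_div_iff (by positivity) (by positivity)]
  ring
end

section
/- Let k and n be positive integers with e((1/2) log(2n-1) + 1) ≤ k ≤ n. Then the k-th elementary symmetric function S_k(n) of 1, 1/3, ..., 1/(2n-1) satisfies S_k(n) < 1; in particular, S_k(n) is not an integer. -/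
open Finset

lemma harm_bound : ∀ n : ℕ, 1 ≤ n →
    (∑ i ∈ Finset.range n, (1 / (1 + 2 * i) : ℝ)) ≤ 1 / 2 * Real.log (2 * n - 1) + 1 := by
  intro n hn
  induction n with
  | zero => omega
  | succ m ih =>
    rcases Nat.eq_or_lt_of_le hn with h1 | h1
    · have : m = 0 := by omega
      subst this
      norm_num
    · have hm : 1 ≤ m := by omega
      have hih := ih hm
      rw [Finset.sum_range_succ]
      have hpos : (0:ℝ) < 2 * m - 1 := by
        have : (1:ℝ) ≤ (m:ℝ) := by exact_mod_cast hm
        linarith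
      have hpos' : (0:ℝ) < 2 * m + 1 := by positivity
      have hlog : Real.log ((2 * m - 1) / (2 * m + 1)) ≤ (2 * m - 1) / (2 * m + 1) - 1 :=
        Real.log_le_sub_one_of_pos (by positivity)
      have hdiv : Real.log ((2 * m - 1) / (2 * m + 1))
          = Real.log (2 * m - 1) - Real.log (2 * m + 1) :=
        Real.log_div (by linarith) (by linarith)
      have hfrac : (2 * (m:ℝ) - 1) / (2 * m + 1) - 1 = -(2 / (2 * m + 1)) := by
        field_simp
        ring
      have key : 1 / (1 + 2 * (m:ℝ)) ≤
          1 / 2 * (Real.log (2 * m + 1) - Real.log (2 * m - 1)) := by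
        rw [hdiv, hfrac] at hlog
        have h2 : 2 / (2 * (m:ℝ) + 1) ≤ Real.log (2 * m + 1) - Real.log (2 * m - 1) := by
          linarith
        have e : 1 / (1 + 2 * (m:ℝ)) = 1 / 2 * (2 / (2 * m + 1)) := by
          field_simp
          ring
        rw [e]
        linarith
      have hcast : (2 * ((m:ℝ) + 1) - 1) = 2 * m + 1 := by ring
      push_cast
      rw [hcast]
      linarith

theorem esymm_lt_one_of_large_k (k n : ℕ) (hk : 0 < k) (hkn : k ≤ n)
    (h : Real.exp 1 * ((1 / 2) * Real.log (2 * n - 1) + 1) ≤ k) :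
    (∑ s ∈ (Finset.range n).powersetCard k, ∏ i ∈ s, (1 / (1 + 2 * i) : ℚ)) < 1 ∧
    ∀ m : ℤ, (∑ s ∈ (Finset.range n).powersetCard k, ∏ i ∈ s, (1 / (1 + 2 * i) : ℚ)) ≠ m := by
  have hn : 1 ≤ n := le_trans hk hkn
  -- real version of the sum
  set x : ℕ → ℝ := fun i => 1 / (1 + 2 * i) with hx
  have hxpos : ∀ i, 0 < x i := by
    intro i; have : (0:ℝ) ≤ (i:ℝ) := Nat.cast_nonneg i
    simp only [hx]; positivity
  set H : ℝ := ∑ i ∈ Finset.range n, x i with hH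
  have hHpos : 0 < H := Finset.sum_pos (fun i _ => hxpos i) ⟨0, by simp [Finset.mem_range]; omega⟩
  have hHle : H ≤ 1 / 2 * Real.log (2 * n - 1) + 1 := harm_bound n hn
  have heH : Real.exp 1 * H ≤ k := by
    have h1 : Real.exp 1 * H ≤ Real.exp 1 * (1 / 2 * Real.log (2 * n - 1) + 1) :=
      mul_le_mul_of_nonneg_left hHle (Real.exp_pos 1).le
    linarith
  set S : ℝ := ∑ s ∈ (Finset.range n).powersetCard k, ∏ i ∈ s, x i with hS
  have hSpos : 0 < S := by
    apply Finset.sum_pos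
    · intro s _; exact Finset.prod_pos fun i _ => hxpos i
    · rw [Finset.powersetCard_nonempty]; simpa using hkn
  set t : ℝ := k / H with ht
  have htpos : 0 < t := div_pos (by exact_mod_cast hk) hHpos
  have key : S * t ^ k < Real.exp k := by
    have e1 : S * t ^ k = ∑ s ∈ (Finset.range n).powersetCard k, ∏ i ∈ s, (t * x i) := by
      rw [hS, Finset.sum_mul]
      apply Finset.sum_congr rfl
      intro s hs
      rw [Finset.prod_mul_distrib, Finset.prod_const,
        (Finset.mem_powersetCard.1 hs).2, mul_comm]
    have e2 : ∑ s ∈ (Finset.range n).powersetCard k, ∏ i ∈ s, (t * x i)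
        ≤ ∑ s ∈ (Finset.range n).powerset, ∏ i ∈ s, (t * x i) := by
      apply Finset.sum_le_sum_of_subset_of_nonneg
      · intro s hs
        exact Finset.mem_powerset.2 (Finset.mem_powersetCard.1 hs).1
      · intro s _ _
        exact Finset.prod_nonneg fun i _ => (mul_pos htpos (hxpos i)).le
    have e3 : ∑ s ∈ (Finset.range n).powerset, ∏ i ∈ s, (t * x i)
        = ∏ i ∈ Finset.range n, (t * x i + 1) := by
      rw [Finset.prod_add]
      apply Finset.sum_congr rfl
      intro s _; simp
    have e4 : ∏ i ∈ Finset.range n, (t * x i + 1) < ∏ i ∈ Finset.range n, Real.exp (t * x i) := by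
      apply Finset.prod_lt_prod_of_nonempty
      · intro i _; positivity
      · intro i _; exact Real.add_one_lt_exp (by positivity)
      · exact ⟨0, by simp [Finset.mem_range]; omega⟩
    have e5 : ∏ i ∈ Finset.range n, Real.exp (t * x i) = Real.exp (t * H) := by
      rw [← Real.exp_sum, hH, Finset.mul_sum]
    have e6 : t * H = k := by
      rw [ht]; field_simp
    calc S * t ^ k = _ := e1
      _ ≤ _ := e2
      _ = _ := e3
      _ < _ := e4
      _ = Real.exp (t * H) := e5
      _ = Real.exp k := by rw [e6]
  have hSlt : S < 1 := by
    have h1 : S < Real.exp k / t ^ k := by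
      rw [lt_div_iff₀ (by positivity)]; exact key
    have h2 : Real.exp (k : ℝ) / t ^ k = (Real.exp 1 * H / k) ^ k := by
      rw [← Real.exp_one_pow, ht, div_pow, div_div_eq_mul_div, ← mul_pow, ← div_pow]
    have h3 : (Real.exp 1 * H / k) ^ k ≤ 1 := by
      apply pow_le_one₀
      · positivity
      · rw [div_le_one (by exact_mod_cast hk)]; exact heH
    calc S < Real.exp k / t ^ k := h1
      _ = _ := h2
      _ ≤ 1 := h3
  -- transfer to ℚ
  have hcast : ((∑ s ∈ (Finset.range n).powersetCard k, ∏ i ∈ s, (1 / (1 + 2 * i) : ℚ)) : ℝ)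
      = S := by
    push_cast [hS, hx]
    rfl
  have hQlt : (∑ s ∈ (Finset.range n).powersetCard k, ∏ i ∈ s, (1 / (1 + 2 * i) : ℚ)) < 1 := by
    have := hSlt; rw [← hcast] at this
    exact_mod_cast this
  have hQpos : 0 < (∑ s ∈ (Finset.range n).powersetCard k, ∏ i ∈ s, (1 / (1 + 2 * i) : ℚ)) := by
    have := hSpos; rw [← hcast] at this
    exact_mod_cast this
  refine ⟨hQlt, fun m hm => ?_⟩
  rw [hm] at hQlt hQpos
  have h1 : (0:ℤ) < m := by exact_mod_cast hQpos
  have h2 : m < 1 := by exact_mod_cast hQlt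
  omega
end

section
/- Let k and n be positive integers with 1 < k ≤ n, and suppose there exists an odd prime p > 2k+6 such that n/(k+3) < p ≤ n/k and p does not divide (3k²+11k+9)(k²+5k+5). Then the k-th elementary symmetric function S_k(n) of 1, 1/3, ..., 1/(2n-1) is not an integer; in fact its p-adic valuation equals −k. -/
open Finset

private def gg (r m : ℕ) : ℕ := ∑ t ∈ (Finset.range m).powersetCard r, ∏ j ∈ t, (2*j+1)

private lemma gg_zero (m : ℕ) : gg 0 m = 1 := by
  simp [gg]

private lemma gg_rec (r m : ℕ) : gg (r+1) (m+1) = gg (r+1) m + (2*m+1) * gg r m := by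
  unfold gg
  rw [Finset.range_add_one, Finset.powersetCard_succ_insert Finset.notMem_range_self,
    Finset.sum_union, Finset.sum_image]
  · congr 1
    rw [Finset.mul_sum]
    refine Finset.sum_congr rfl fun t ht => ?_
    rw [Finset.prod_insert fun hm => Finset.notMem_range_self ((Finset.mem_powersetCard.mp ht).1 hm)]
  · intro t ht t' ht' h
    have hm : m ∉ t := fun hm => Finset.notMem_range_self ((Finset.mem_powersetCard.mp ht).1 hm)
    have hm' : m ∉ t' := fun hm => Finset.notMem_range_self ((Finset.mem_powersetCard.mp ht').1 hm)
    have := congrArg (Finset.erase · m) h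
    simpa [Finset.erase_insert, hm, hm'] using this
  · rw [Finset.disjoint_right]
    rintro t ht ht'
    obtain ⟨u, hu, rfl⟩ := Finset.mem_image.mp ht
    exact Finset.notMem_range_self ((Finset.mem_powersetCard.mp ht').1 (Finset.mem_insert_self m u))

private lemma gg_big (r m : ℕ) (h : m < r) : gg r m = 0 := by
  unfold gg
  rw [Finset.powersetCard_eq_empty.mpr (by simpa using h), Finset.sum_empty]

private lemma gg_one (m : ℕ) : gg 1 m = m^2 := by
  induction m with
  | zero => exact gg_big 1 0 (by norm_num)
  | succ m ih => rw [gg_rec, ih, gg_zero]; ring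

private lemma gg_two (m : ℕ) : 6 * gg 2 (m+2) = (m+1)*(m+2)*(3*m^2+11*m+9) := by
  induction m with
  | zero =>
    rw [show gg 2 2 = 3 by rw [show (2:ℕ) = 1+1 from rfl, gg_rec, gg_one, gg_big 2 1 (by norm_num)]; norm_num]
    norm_num
  | succ m ih => rw [gg_rec, Nat.mul_add, ih, gg_one]; ring

private lemma gg_three (m : ℕ) : 6 * gg 3 (m+3) = (m+1)*(m+2)*(m+3)^2*(m^2+5*m+5) := by
  induction m with
  | zero =>
    rw [show gg 3 3 = 15 by
      rw [show (3:ℕ) = 2+1 from rfl, gg_rec, gg_big 3 2 (by norm_num),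
        show gg 2 2 = 3 by rw [show (2:ℕ) = 1+1 from rfl, gg_rec, gg_one, gg_big 2 1 (by norm_num)]; norm_num]]
    norm_num
  | succ m ih =>
    rw [show m+1+3 = (m+3)+1 from rfl, gg_rec, Nat.mul_add, ih,
      show m+3 = (m+1)+2 from rfl, Nat.mul_left_comm, gg_two]
    ring

theorem esymm_not_int_of_prime (k n p : ℕ) (hk : 1 < k) (hkn : k ≤ n)
    (hp : p.Prime) (hodd : Odd p) (hp2k : p > 2 * k + 6)
    (hlow : (n : ℝ) / (k + 3) < p) (hupp : (p : ℝ) ≤ (n : ℝ) / k)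
    (hnd : ¬ p ∣ (3 * k ^ 2 + 11 * k + 9) * (k ^ 2 + 5 * k + 5)) :
    padicValRat p (∑ s ∈ (Finset.range n).powersetCard k, ∏ i ∈ s, (1 / (1 + 2 * i) : ℚ))
      = -(k : ℤ) ∧
    ∀ m : ℤ, (∑ s ∈ (Finset.range n).powersetCard k, ∏ i ∈ s, (1 / (1 + 2 * i) : ℚ)) ≠ m := by
  haveI : Fact p.Prime := ⟨hp⟩
  obtain ⟨q, hq⟩ : ∃ q, p = 2*q+1 := by obtain ⟨q, h⟩ := hodd; exact ⟨q, by omega⟩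
  -- nat versions of the real inequalities
  have hkp : k * p ≤ n := by
    have h0 : (0:ℝ) < k := by positivity
    rw [le_div_iff₀ h0, mul_comm] at hupp
    exact_mod_cast hupp
  have hnk3 : n < (k+3) * p := by
    have h0 : (0:ℝ) < (k:ℝ)+3 := by positivity
    rw [div_lt_iff₀ h0, mul_comm] at hlow
    exact_mod_cast hlow
  have hppos : 0 < p := hp.pos
  have hqn : q < n := by
    have : p ≤ k * p := Nat.le_mul_of_pos_left p (by omega)
    omega
  have hfinj : Function.Injective (fun j => j * p + q) := by
    intro a b hab
    simp only at hab
    exact Nat.eq_of_mul_eq_mul_right hppos (by omega)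
  set fe : ℕ ↪ ℕ := ⟨fun j => j * p + q, hfinj⟩ with hfe
  -- the count m of odd multiples of p below 2n
  set m : ℕ := (n - 1 - q) / p + 1 with hm
  have hmchar : ∀ j : ℕ, j < m ↔ j * p + q < n := by
    intro j
    rw [hm, Nat.lt_succ_iff, Nat.le_div_iff_mul_le hppos]
    omega
  have hkm : k ≤ m := by
    obtain ⟨k', hk'⟩ : ∃ k', k = k' + 1 := ⟨k-1, by omega⟩
    have h2 : k' * p + p = k * p := by rw [hk']; ring
    have := (hmchar k').mpr (by omega)
    omega
  have hmk3 : m ≤ k + 3 := by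
    by_contra hcon
    have h1 := (hmchar (k+3)).mp (by omega)
    have h2 : (k+3) * p ≤ (k+3) * p + q := by omega
    omega
  -- the set of indices i < n with p ∣ 2i+1
  set D : Finset ℕ := (Finset.range n).filter (fun i => p ∣ 2*i+1) with hD
  have hDmap : D = (Finset.range m).map fe := by
    ext i
    simp only [hD, Finset.mem_filter, Finset.mem_range, Finset.mem_map, hfe,
      Function.Embedding.coeFn_mk]
    constructor
    · rintro ⟨hin, t, ht⟩
      have htodd : Odd t := by
        rcases Nat.even_or_odd t with he | ho
        · exfalso
          obtain ⟨c, hc⟩ := he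
          rw [hc] at ht
          have : p * (c + c) = 2 * (p * c) := by ring
          omega
        · exact ho
      obtain ⟨j, hj⟩ := htodd
      have hij : i = j * p + q := by
        rw [hj] at ht
        have : p * (2 * j + 1) = 2 * (j * p) + p := by ring
        omega
      exact ⟨j, (hmchar j).mpr (by omega), hij.symm⟩
    · rintro ⟨j, hjm, rfl⟩
      refine ⟨by have := (hmchar j).mp hjm; omega, 2*j+1, ?_⟩
      have : p * (2 * j + 1) = 2 * (j * p) + p := by ring
      omega
  have hDsub : D ⊆ Finset.range n := Finset.filter_subset _ _
  have hDcard : D.card = m := by rw [hDmap, Finset.card_map, Finset.card_range]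
  have hDdvd : ∀ i ∈ D, p ∣ 2*i+1 := by
    intro i hi
    simp only [hD, Finset.mem_filter] at hi
    exact hi.2
  have hDnot : ∀ i ∈ Finset.range n \ D, ¬ p ∣ 2*i+1 := by
    intro i hi
    rw [Finset.mem_sdiff] at hi
    intro hdvd
    exact hi.2 (by simp only [hD, Finset.mem_filter]; exact ⟨hi.1, hdvd⟩)
  -- main integers
  set C : ℕ := ∏ i ∈ Finset.range n \ D, (2*i+1) with hC
  set Q : ℕ := ∏ i ∈ Finset.range n, (2*i+1) with hQ
  set N : ℕ := ∑ s ∈ (Finset.range n).powersetCard k, ∏ i ∈ Finset.range n \ s, (2*i+1) with hN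
  have hCpos : 0 < C := Finset.prod_pos (fun i _ => by omega)
  have hQpos : 0 < Q := Finset.prod_pos (fun i _ => by omega)
  have hNpos : 0 < N := by
    apply Finset.sum_pos (fun s _ => Finset.prod_pos (fun i _ => by omega))
    rw [Finset.powersetCard_nonempty, Finset.card_range]
    exact hkn
  have hpC : ¬ p ∣ C := by
    rw [hC]
    intro hdvd
    obtain ⟨i, hi, hdvd⟩ := hp.prime.exists_mem_finset_dvd hdvd
    exact hDnot i hi hdvd
  -- p does not divide small odd numbers
  have hpsmall : ∀ x, 0 < x → x < p → ¬ p ∣ x := by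
    intro x hx hxp hdvd
    exact absurd (Nat.le_of_dvd hx hdvd) (by omega)
  -- valuation of Q
  have hQdecomp : Q = p^m * ((∏ j ∈ Finset.range m, (2*j+1)) * C) := by
    have h1 : ∏ i ∈ D, (2*i+1) = (∏ j ∈ Finset.range m, (2*j+1)) * p^m := by
      rw [hDmap, Finset.prod_map]
      simp only [hfe, Function.Embedding.coeFn_mk]
      have h2 : ∀ j ∈ Finset.range m, 2*(j*p+q)+1 = (2*j+1)*p := by
        intro j _
        have : (2*j+1)*p = 2*(j*p) + p := by ring
        omega
      rw [Finset.prod_congr rfl h2, Finset.prod_mul_distrib, Finset.prod_const,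
        Finset.card_range]
    rw [hQ, ← Finset.prod_sdiff hDsub, h1, hC]
    ring
  have hpggsmall : ¬ p ∣ (∏ j ∈ Finset.range m, (2*j+1)) := by
    intro hdvd
    obtain ⟨j, hj, hdvd⟩ := hp.prime.exists_mem_finset_dvd hdvd
    rw [Finset.mem_range] at hj
    exact hpsmall _ (by omega) (by omega) hdvd
  have hQval : padicValNat p Q = m := by
    have hu : ¬ p ∣ (∏ j ∈ Finset.range m, (2*j+1)) * C := by
      intro hdvd
      rcases (Nat.Prime.dvd_mul hp).mp hdvd with h | h
      exacts [hpggsmall h, hpC h]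
    rw [hQdecomp, padicValNat.mul (pow_ne_zero _ hppos.ne')
      (by intro h0; rw [h0] at hu; exact hu (dvd_zero p)), padicValNat.prime_pow,
      padicValNat.eq_zero_of_not_dvd hu, add_zero]
  have hN1 : ∑ s ∈ Finset.powersetCard k D, ∏ i ∈ Finset.range n \ s, (2*i+1)
      = p^(m-k) * (C * gg (m-k) m) := by
    have step1 : ∀ s ∈ Finset.powersetCard k D,
        ∏ i ∈ Finset.range n \ s, (2*i+1) = C * ∏ i ∈ D \ s, (2*i+1) := by
      intro s hs
      obtain ⟨hsD, hscard⟩ := Finset.mem_powersetCard.mp hs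
      have hsub : D \ s ⊆ Finset.range n \ s :=
        Finset.sdiff_subset_sdiff hDsub (Finset.Subset.refl s)
      have heq : (Finset.range n \ s) \ (D \ s) = Finset.range n \ D := by
        ext i
        simp only [Finset.mem_sdiff]
        constructor
        · rintro ⟨⟨h1, h2⟩, h3⟩
          exact ⟨h1, fun hiD => h3 ⟨hiD, h2⟩⟩
        · rintro ⟨h1, h2⟩
          exact ⟨⟨h1, fun hs' => h2 (hsD hs')⟩, fun h => h2 h.1⟩
      rw [← Finset.prod_sdiff hsub, heq, hC]
    rw [Finset.sum_congr rfl step1]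
    have step2 : ∑ s ∈ Finset.powersetCard k D, C * ∏ i ∈ D \ s, (2*i+1)
        = ∑ t ∈ Finset.powersetCard (m-k) D, C * ∏ i ∈ t, (2*i+1) := by
      refine Finset.sum_nbij' (fun s => D \ s) (fun t => D \ t) ?_ ?_ ?_ ?_ ?_
      · intro s hs
        obtain ⟨hsD, hscard⟩ := Finset.mem_powersetCard.mp hs
        exact Finset.mem_powersetCard.mpr ⟨Finset.sdiff_subset,
          by rw [Finset.card_sdiff_of_subset hsD, hDcard, hscard]⟩
      · intro t ht
        obtain ⟨htD, htcard⟩ := Finset.mem_powersetCard.mp ht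
        exact Finset.mem_powersetCard.mpr ⟨Finset.sdiff_subset,
          by rw [Finset.card_sdiff_of_subset htD, hDcard, htcard]; omega⟩
      · intro s hs
        obtain ⟨hsD, _⟩ := Finset.mem_powersetCard.mp hs
        show D \ (D \ s) = s
        rw [Finset.sdiff_sdiff_self_left, Finset.inter_eq_right.mpr hsD]
      · intro t ht
        obtain ⟨htD, _⟩ := Finset.mem_powersetCard.mp ht
        show D \ (D \ t) = t
        rw [Finset.sdiff_sdiff_self_left, Finset.inter_eq_right.mpr htD]
      · intro s _; rfl
    rw [step2, hDmap, Finset.powersetCard_map, Finset.sum_map]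
    simp only [RelEmbedding.coe_toEmbedding, Finset.mapEmbedding_apply,
      Finset.prod_map, hfe, Function.Embedding.coeFn_mk]
    simp only [gg]
    rw [Finset.mul_sum, Finset.mul_sum]
    refine Finset.sum_congr rfl fun t ht => ?_
    obtain ⟨htsub, htcard⟩ := Finset.mem_powersetCard.mp ht
    have h2 : ∀ j ∈ t, 2*(j*p+q)+1 = (2*j+1)*p := by
      intro j _
      have : (2*j+1)*p = 2*(j*p) + p := by ring
      omega
    rw [Finset.prod_congr rfl h2, Finset.prod_mul_distrib, Finset.prod_const, htcard]
    ring
  have hN2 : p^(m-k+1) ∣ ∑ s ∈ (Finset.range n).powersetCard k \ Finset.powersetCard k D,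
      ∏ i ∈ Finset.range n \ s, (2*i+1) := by
    apply Finset.dvd_sum
    intro s hs
    rw [Finset.mem_sdiff] at hs
    obtain ⟨hsB, hsA⟩ := hs
    obtain ⟨hsub, hcard⟩ := Finset.mem_powersetCard.mp hsB
    have hnsub : ¬ s ⊆ D := fun h => hsA (Finset.mem_powersetCard.mpr ⟨h, hcard⟩)
    have hinter : (D ∩ s).card < k := by
      have hle : (D ∩ s).card ≤ k :=
        hcard ▸ Finset.card_le_card Finset.inter_subset_right
      rcases hle.lt_or_eq with h | h
      · exact h
      · exfalso
        apply hnsub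
        have heq : D ∩ s = s := Finset.eq_of_subset_of_card_le
          Finset.inter_subset_right (by omega)
        intro x hx
        have hx2 : x ∈ D ∩ s := by rw [heq]; exact hx
        exact (Finset.mem_inter.mp hx2).1
    have hcardDs : m - k + 1 ≤ (D \ s).card := by
      have := Finset.card_sdiff_add_card_inter D s
      omega
    calc p^(m-k+1) ∣ p^((D \ s).card) := pow_dvd_pow p hcardDs
      _ ∣ ∏ i ∈ D \ s, (2*i+1) := by
          rw [← Finset.prod_const]
          exact Finset.prod_dvd_prod_of_dvd _ _
            fun i hi => hDdvd i (Finset.mem_sdiff.mp hi).1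
      _ ∣ ∏ i ∈ Finset.range n \ s, (2*i+1) :=
          Finset.prod_dvd_prod_of_subset _ _ _
            (Finset.sdiff_subset_sdiff hDsub (Finset.Subset.refl s))
  have hple : ∀ x, p ∣ x → 0 < x → p ≤ x := fun x hd hx => Nat.le_of_dvd hx hd
  have hpgg : ¬ p ∣ gg (m-k) m := by
    have hd : m - k = 0 ∨ m - k = 1 ∨ m - k = 2 ∨ m - k = 3 := by omega
    rcases hd with hd | hd | hd | hd
    · rw [hd, gg_zero]
      rw [Nat.dvd_one]
      omega
    · rw [hd, show m = k + 1 by omega, gg_one]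
      intro hdvd
      have := hple _ (hp.dvd_of_dvd_pow hdvd) (by omega)
      omega
    · rw [hd, show m = k + 2 by omega]
      intro hdvd
      have h6 : p ∣ (k+1)*(k+2)*(3*k^2+11*k+9) := by
        rw [← gg_two]
        exact Dvd.dvd.mul_left hdvd 6
      rcases (Nat.Prime.dvd_mul hp).mp h6 with h | h
      · rcases (Nat.Prime.dvd_mul hp).mp h with h | h
        · have := hple _ h (by omega); omega
        · have := hple _ h (by omega); omega
      · exact hnd (Dvd.dvd.mul_right h _)
    · rw [hd, show m = k + 3 by omega]
      intro hdvd
      have h6 : p ∣ (k+1)*(k+2)*(k+3)^2*(k^2+5*k+5) := by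
        rw [← gg_three]
        exact Dvd.dvd.mul_left hdvd 6
      rcases (Nat.Prime.dvd_mul hp).mp h6 with h | h
      · rcases (Nat.Prime.dvd_mul hp).mp h with h | h
        · rcases (Nat.Prime.dvd_mul hp).mp h with h | h
          · have := hple _ h (by omega); omega
          · have := hple _ h (by omega); omega
        · have := hple _ (hp.dvd_of_dvd_pow h) (by omega); omega
      · exact hnd (Dvd.dvd.mul_left h _)
  have hNval : padicValNat p N = m - k := by
    have hAB : Finset.powersetCard k D ⊆ (Finset.range n).powersetCard k :=
      Finset.powersetCard_mono hDsub
    obtain ⟨W, hW⟩ := hN2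
    have hNeq : N = p^(m-k) * (C * gg (m-k) m + p * W) := by
      rw [hN, ← Finset.sum_sdiff hAB, hN1, hW]
      ring
    have hu : ¬ p ∣ (C * gg (m-k) m + p * W) := by
      intro h
      have h2 : p ∣ C * gg (m-k) m := by
        rw [add_comm] at h
        exact (Nat.dvd_add_right (dvd_mul_right p W)).mp h
      rcases (Nat.Prime.dvd_mul hp).mp h2 with h | h
      exacts [hpC h, hpgg h]
    rw [hNeq, padicValNat.mul (pow_ne_zero _ hppos.ne')
      (by intro h0; rw [h0] at hu; exact hu (dvd_zero p)), padicValNat.prime_pow,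
      padicValNat.eq_zero_of_not_dvd hu, add_zero]
  -- relate S to N / Q
  set S : ℚ := ∑ s ∈ (Finset.range n).powersetCard k, ∏ i ∈ s, (1 / (1 + 2 * i) : ℚ) with hS
  have hSQ : S * Q = N := by
    have hQc : (Q:ℚ) = ∏ i ∈ Finset.range n, ((1:ℚ) + 2*i) := by
      rw [hQ]
      push_cast
      exact Finset.prod_congr rfl fun i _ => by ring
    have hNc : (N:ℚ) = ∑ s ∈ (Finset.range n).powersetCard k,
        ∏ i ∈ Finset.range n \ s, ((1:ℚ)+2*i) := by
      rw [hN]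
      push_cast
      exact Finset.sum_congr rfl fun s _ => Finset.prod_congr rfl fun i _ => by ring
    rw [hQc, hNc, hS, Finset.sum_mul]
    refine Finset.sum_congr rfl fun s hs => ?_
    obtain ⟨hsub, hcard⟩ := Finset.mem_powersetCard.mp hs
    rw [← Finset.prod_sdiff hsub, mul_comm (∏ i ∈ Finset.range n \ s, ((1:ℚ)+2*i)),
      ← mul_assoc, ← Finset.prod_mul_distrib]
    have h1 : ∏ i ∈ s, ((1/(1+2*(i:ℚ))) * (1+2*i)) = 1 := by
      refine Finset.prod_eq_one fun i _ => ?_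
      rw [one_div_mul_cancel]
      positivity
    rw [h1, one_mul]
  have hQne : (Q:ℚ) ≠ 0 := Nat.cast_ne_zero.mpr hQpos.ne'
  have hSval : padicValRat p S = -(k:ℤ) := by
    have hSeq : S = (N:ℚ) / (Q:ℚ) := by
      field_simp
      exact hSQ
    rw [hSeq, padicValRat.div (Nat.cast_ne_zero.mpr hNpos.ne') hQne,
      padicValRat.of_nat, padicValRat.of_nat, hNval, hQval]
    omega
  refine ⟨hSval, ?_⟩
  intro z hz
  have hzne : z ≠ 0 := by
    rintro rfl
    rw [hz] at hSval
    norm_num at hSval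
    omega
  rw [hz, padicValRat.of_int] at hSval
  omega
end

section
/- For any integer n > 1, the sum ∑_{i=0}^{n-1} 1/(1+2i) is not an integer. -/
theorem sum_recip_odds_not_int (n : ℕ) (hn : 1 < n) :
    ∀ m : ℤ, (∑ i ∈ Finset.range n, (1 / (1 + 2 * i) : ℚ)) ≠ m := by
  intro m hm
  haveI : Fact (Nat.Prime 3) := ⟨by norm_num⟩
  set F : ℕ → ℚ := fun i => 1 / (1 + 2 * i) with hF
  have hFpos : ∀ i, 0 < F i := fun i => by positivity
  have hval : ∀ i : ℕ, padicValRat 3 (F i) = -(padicValNat 3 (1 + 2 * i) : ℤ) := by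
    intro i
    rw [hF]
    simp only [one_div]
    rw [padicValRat.inv]
    congr 1
    rw [show ((1 : ℚ) + 2 * i) = ((1 + 2 * i : ℕ) : ℚ) by push_cast; ring,
      padicValRat.of_nat]
  set k := Nat.log 3 (2 * n - 1) with hk
  have h2n : 2 * n - 1 ≠ 0 := by omega
  have hpow_le : 3 ^ k ≤ 2 * n - 1 := Nat.pow_log_le_self 3 h2n
  have hlt : 2 * n - 1 < 3 ^ (k + 1) := Nat.lt_pow_succ_log_self (by norm_num) _
  have hk1 : 1 ≤ k := Nat.le_log_of_pow_le (by norm_num) (by omega)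
  obtain ⟨j, hj⟩ : Odd (3 ^ k) := Odd.pow (by decide)
  have hjn : j < n := by omega
  -- valuation of the special term
  have hvj : padicValNat 3 (1 + 2 * j) = k := by
    rw [show 1 + 2 * j = 3 ^ k by omega]
    exact padicValNat.prime_pow k
  -- all other terms have smaller power of 3
  have hvi : ∀ i < n, i ≠ j → padicValNat 3 (1 + 2 * i) < k := by
    intro i hi hij
    by_contra h
    push_neg at h
    have hdvd : 3 ^ k ∣ 1 + 2 * i :=
      dvd_trans (pow_dvd_pow 3 (by omega)) pow_padicValNat_dvd
    obtain ⟨c, hc⟩ := hdvd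
    have hub : 1 + 2 * i ≤ 2 * n - 1 := by omega
    have h3k : 0 < 3 ^ k := Nat.pow_pos (by norm_num)
    have hclt : c < 3 := by
      by_contra hc3
      push_neg at hc3
      have : 3 ^ (k + 1) ≤ 3 ^ k * c := by
        rw [pow_succ]; exact Nat.mul_le_mul_left _ hc3
      omega
    interval_cases c <;> omega
  -- split off the special term
  have hjmem : j ∈ Finset.range n := Finset.mem_range.mpr hjn
  have hsplit : (∑ i ∈ Finset.range n, F i) = F j + ∑ i ∈ (Finset.range n).erase j, F i :=
    (Finset.add_sum_erase _ F hjmem).symm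
  have hne : ((Finset.range n).erase j).Nonempty := by
    rw [← Finset.card_pos, Finset.card_erase_of_mem hjmem, Finset.card_range]
    omega
  have hrest : padicValRat 3 (F j) < padicValRat 3 (∑ i ∈ (Finset.range n).erase j, F i) := by
    apply padicValRat.lt_sum_of_lt hne _ hFpos
    intro i hi
    rw [Finset.mem_erase, Finset.mem_range] at hi
    rw [hval, hval, hvj]
    have := hvi i hi.2 hi.1
    omega
  have hsum_val : padicValRat 3 (∑ i ∈ Finset.range n, F i) = -(k : ℤ) := by
    rw [hsplit, padicValRat.add_eq_of_lt _ (hFpos j).ne'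
      (Finset.sum_pos (fun i _ => hFpos i) hne).ne' hrest, hval, hvj]
    exact (add_pos (hFpos j) (Finset.sum_pos (fun i _ => hFpos i) hne)).ne'
  rw [hm, padicValRat.of_int] at hsum_val
  omega
end
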